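/- For α, β ∈ ℂ, the 6-dimensional anticommutative algebras T(α) and T(β), with basis e1,...,e6 and nonzero products e1e2 = e3, e1e3 = e4, e1e5 = (α+1)e6, e2e3 = e5, e2e4 = αe6 (resp. with β), are isomorphic if and only if β = α or β = -α-1. -/

import Mathlib

/-- The 6-dimensional algebra `T⁶₀₉(α)` with `e₁e₂=e₃, e₁e₃=e₄,
e₁e₅=(α+1)e₆, e₂e₃=e₅, e₂e₄=αe₆` (anticommutative, other products zero). -/
def mulT609 (α : ℂ) (x y : Fin 6 → ℂ) : Fin 6 → ℂ :=
  ![0, 0, x 0 * y 1 - x 1 * y 0, x 0 * y 2 - x 2 * y 0,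
    x 1 * y 2 - x 2 * y 1,
    (α + 1) * (x 0 * y 4 - x 4 * y 0) + α * (x 1 * y 3 - x 3 * y 1)]

section T609aux
variable (γ : ℂ) (x y : Fin 6 → ℂ)
@[simp] lemma mulT609_0 : mulT609 γ x y 0 = 0 := rfl
@[simp] lemma mulT609_1 : mulT609 γ x y 1 = 0 := rfl
@[simp] lemma mulT609_2 : mulT609 γ x y 2 = x 0 * y 1 - x 1 * y 0 := rfl
@[simp] lemma mulT609_3 : mulT609 γ x y 3 = x 0 * y 2 - x 2 * y 0 := rfl
@[simp] lemma mulT609_4 : mulT609 γ x y 4 = x 1 * y 2 - x 2 * y 1 := rfl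
@[simp] lemma mulT609_5 : mulT609 γ x y 5 =
    (γ + 1) * (x 0 * y 4 - x 4 * y 0) + γ * (x 1 * y 3 - x 3 * y 1) := rfl
end T609aux

def T609e1 : Fin 6 → ℂ := ![1,0,0,0,0,0]
def T609e2 : Fin 6 → ℂ := ![0,1,0,0,0,0]
def T609e3 : Fin 6 → ℂ := ![0,0,1,0,0,0]
def T609e4 : Fin 6 → ℂ := ![0,0,0,1,0,0]
def T609e5 : Fin 6 → ℂ := ![0,0,0,0,1,0]
def T609e6 : Fin 6 → ℂ := ![0,0,0,0,0,1]
@[simp] lemma T609e1_0 : T609e1 0 = 1 := rfl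
@[simp] lemma T609e1_1 : T609e1 1 = 0 := rfl
@[simp] lemma T609e1_2 : T609e1 2 = 0 := rfl
@[simp] lemma T609e1_3 : T609e1 3 = 0 := rfl
@[simp] lemma T609e1_4 : T609e1 4 = 0 := rfl
@[simp] lemma T609e1_5 : T609e1 5 = 0 := rfl
@[simp] lemma T609e2_0 : T609e2 0 = 0 := rfl
@[simp] lemma T609e2_1 : T609e2 1 = 1 := rfl
@[simp] lemma T609e2_2 : T609e2 2 = 0 := rfl
@[simp] lemma T609e2_3 : T609e2 3 = 0 := rfl
@[simp] lemma T609e2_4 : T609e2 4 = 0 := rfl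
@[simp] lemma T609e2_5 : T609e2 5 = 0 := rfl
@[simp] lemma T609e3_0 : T609e3 0 = 0 := rfl
@[simp] lemma T609e3_1 : T609e3 1 = 0 := rfl
@[simp] lemma T609e3_2 : T609e3 2 = 1 := rfl
@[simp] lemma T609e3_3 : T609e3 3 = 0 := rfl
@[simp] lemma T609e3_4 : T609e3 4 = 0 := rfl
@[simp] lemma T609e3_5 : T609e3 5 = 0 := rfl
@[simp] lemma T609e4_0 : T609e4 0 = 0 := rfl
@[simp] lemma T609e4_1 : T609e4 1 = 0 := rfl
@[simp] lemma T609e4_2 : T609e4 2 = 0 := rfl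
@[simp] lemma T609e4_3 : T609e4 3 = 1 := rfl
@[simp] lemma T609e4_4 : T609e4 4 = 0 := rfl
@[simp] lemma T609e4_5 : T609e4 5 = 0 := rfl
@[simp] lemma T609e5_0 : T609e5 0 = 0 := rfl
@[simp] lemma T609e5_1 : T609e5 1 = 0 := rfl
@[simp] lemma T609e5_2 : T609e5 2 = 0 := rfl
@[simp] lemma T609e5_3 : T609e5 3 = 0 := rfl
@[simp] lemma T609e5_4 : T609e5 4 = 1 := rfl
@[simp] lemma T609e5_5 : T609e5 5 = 0 := rfl
@[simp] lemma T609e6_0 : T609e6 0 = 0 := rfl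
@[simp] lemma T609e6_1 : T609e6 1 = 0 := rfl
@[simp] lemma T609e6_2 : T609e6 2 = 0 := rfl
@[simp] lemma T609e6_3 : T609e6 3 = 0 := rfl
@[simp] lemma T609e6_4 : T609e6 4 = 0 := rfl
@[simp] lemma T609e6_5 : T609e6 5 = 1 := rfl

noncomputable def T609sigMap : (Fin 6 → ℂ) →ₗ[ℂ] (Fin 6 → ℂ) where
  toFun x := ![x 1, x 0, -x 2, -x 4, -x 3, x 5]
  map_add' x y := by
    funext i; fin_cases i <;> first | rfl | (show _ = (_ : ℂ) + _; simp; try ring)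
  map_smul' c x := by
    funext i; fin_cases i <;> first | rfl | (show _ = _ * _; simp; try ring)

section T609aux2
variable (x : Fin 6 → ℂ)
@[simp] lemma T609sigMap_0 : T609sigMap x 0 = x 1 := rfl
@[simp] lemma T609sigMap_1 : T609sigMap x 1 = x 0 := rfl
@[simp] lemma T609sigMap_2 : T609sigMap x 2 = -x 2 := rfl
@[simp] lemma T609sigMap_3 : T609sigMap x 3 = -x 4 := rfl
@[simp] lemma T609sigMap_4 : T609sigMap x 4 = -x 3 := rfl
@[simp] lemma T609sigMap_5 : T609sigMap x 5 = x 5 := rfl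
end T609aux2

noncomputable def T609sig : (Fin 6 → ℂ) ≃ₗ[ℂ] (Fin 6 → ℂ) :=
  LinearEquiv.ofInvolutive T609sigMap (by intro x; funext i; fin_cases i <;> simp)

@[simp] lemma T609sig_apply (x : Fin 6 → ℂ) : T609sig x = T609sigMap x := rfl

lemma T609sig_mul (α : ℂ) (u v : Fin 6 → ℂ) :
    T609sig (mulT609 α u v) = mulT609 (-α-1) (T609sig u) (T609sig v) := by
  funext i; fin_cases i <;> simp <;> ring

lemma T609_alg (α β a1 a2 b1 b2 : ℂ) (hD : a1*b2 - a2*b1 ≠ 0)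
    (E1 : (α+1) * ((a1*b2-a2*b1)*(a1*b2-a2*b1))
        = ((β+1)*(a1*b2) + β*(a2*b1)) * (a1*b2-a2*b1))
    (E2 : α * ((a1*b2-a2*b1)*(a1*b2-a2*b1))
        = ((β+1)*(a2*b1) + β*(a1*b2)) * (a1*b2-a2*b1))
    (hA : (a1*a2) * ((a1*b2-a2*b1)*(2*β+1)) = 0)
    (hB : (b1*b2) * ((a1*b2-a2*b1)*(2*β+1)) = 0) :
    β = α ∨ β = -α-1 := by
  by_cases hb : 2*β+1 = 0
  · left
    have hsum : (2*α+1) * ((a1*b2-a2*b1)*(a1*b2-a2*b1)) = 0 := by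
      linear_combination E1 + E2 + (a1*b2+a2*b1)*(a1*b2-a2*b1)*hb
    have h2a : 2*α+1 = 0 :=
      (mul_eq_zero.mp hsum).resolve_right (mul_ne_zero hD hD)
    linear_combination (hb - h2a)/2
  · have hA' : a1 * a2 = 0 :=
      (mul_eq_zero.mp hA).resolve_right (mul_ne_zero hD hb)
    have hB' : b1 * b2 = 0 :=
      (mul_eq_zero.mp hB).resolve_right (mul_ne_zero hD hb)
    rcases mul_eq_zero.mp hA' with h1 | h2
    · right
      subst h1
      have hb1 : b1 ≠ 0 := by intro h; apply hD; rw [h]; ring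
      have ha2 : a2 ≠ 0 := by intro h; apply hD; rw [h]; ring
      have hb2 : b2 = 0 := (mul_eq_zero.mp hB').resolve_left hb1
      subst hb2
      have key : (α+1+β) * ((a2*b1)*(a2*b1)) = 0 := by linear_combination E1
      have h0 : α+1+β = 0 :=
        (mul_eq_zero.mp key).resolve_right
          (mul_ne_zero (mul_ne_zero ha2 hb1) (mul_ne_zero ha2 hb1))
      linear_combination h0
    · left
      subst h2
      have ha1 : a1 ≠ 0 := by intro h; apply hD; rw [h]; ring
      have hb2 : b2 ≠ 0 := by intro h; apply hD; rw [h]; ring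
      have hb1 : b1 = 0 := (mul_eq_zero.mp hB').resolve_right hb2
      subst hb1
      have key : (α-β) * ((a1*b2)*(a1*b2)) = 0 := by linear_combination E1
      have h0 : α-β = 0 :=
        (mul_eq_zero.mp key).resolve_right
          (mul_ne_zero (mul_ne_zero ha1 hb2) (mul_ne_zero ha1 hb2))
      linear_combination -h0

/-- `T⁶₀₉(α) ≅ T⁶₀₉(β)` if and only if `β = α` or `β = -α-1`. -/
theorem T609_iso_iff (α β : ℂ) :
    (∃ e : (Fin 6 → ℂ) ≃ₗ[ℂ] (Fin 6 → ℂ),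
      ∀ u v : Fin 6 → ℂ, e (mulT609 α u v) = mulT609 β (e u) (e v)) ↔
    (β = α ∨ β = -α - 1) := by
  constructor
  · rintro ⟨e, h⟩
    set f1 := e T609e1 with hf1
    set f2 := e T609e2 with hf2
    set f3 := e T609e3 with hf3
    set f4 := e T609e4 with hf4
    set f5 := e T609e5 with hf5
    set f6 := e T609e6 with hf6
    have h3 : f3 = mulT609 β f1 f2 := by
      have t := h T609e1 T609e2
      rwa [show mulT609 α T609e1 T609e2 = T609e3 by
        funext i; fin_cases i <;> simp] at t
    have h4 : f4 = mulT609 β f1 f3 := by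
      have t := h T609e1 T609e3
      rwa [show mulT609 α T609e1 T609e3 = T609e4 by
        funext i; fin_cases i <;> simp] at t
    have h5 : f5 = mulT609 β f2 f3 := by
      have t := h T609e2 T609e3
      rwa [show mulT609 α T609e2 T609e3 = T609e5 by
        funext i; fin_cases i <;> simp] at t
    have h6a : (α+1) • f6 = mulT609 β f1 f5 := by
      have t := h T609e1 T609e5
      rwa [show mulT609 α T609e1 T609e5 = (α+1) • T609e6 by
        funext i; fin_cases i <;> simp, map_smul] at t
    have h6b : α • f6 = mulT609 β f2 f4 := by
      have t := h T609e2 T609e4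
      rwa [show mulT609 α T609e2 T609e4 = α • T609e6 by
        funext i; fin_cases i <;> simp, map_smul] at t
    have hz1 : mulT609 β f1 f4 = 0 := by
      have t := h T609e1 T609e4
      rw [show mulT609 α T609e1 T609e4 = 0 by
        funext i; fin_cases i <;> simp, map_zero] at t
      exact t.symm
    have hz2 : mulT609 β f2 f5 = 0 := by
      have t := h T609e2 T609e5
      rw [show mulT609 α T609e2 T609e5 = 0 by
        funext i; fin_cases i <;> simp, map_zero] at t
      exact t.symm
    -- coordinates
    have q30 : f3 0 = 0 := by simpa using congrFun h3 0
    have q31 : f3 1 = 0 := by simpa using congrFun h3 1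
    have q32 : f3 2 = f1 0 * f2 1 - f1 1 * f2 0 := by simpa using congrFun h3 2
    have q40 : f4 0 = 0 := by simpa using congrFun h4 0
    have q41 : f4 1 = 0 := by simpa using congrFun h4 1
    have q42 : f4 2 = 0 := by
      have t := congrFun h4 2; rw [mulT609_2, q30, q31] at t; simpa using t
    have q43 : f4 3 = f1 0 * f3 2 := by
      have t := congrFun h4 3; rw [mulT609_3, q30] at t; simpa using t
    have q44 : f4 4 = f1 1 * f3 2 := by
      have t := congrFun h4 4; rw [mulT609_4, q31] at t; simpa using t
    have q50 : f5 0 = 0 := by simpa using congrFun h5 0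
    have q51 : f5 1 = 0 := by simpa using congrFun h5 1
    have q52 : f5 2 = 0 := by
      have t := congrFun h5 2; rw [mulT609_2, q30, q31] at t; simpa using t
    have q53 : f5 3 = f2 0 * f3 2 := by
      have t := congrFun h5 3; rw [mulT609_3, q30] at t; simpa using t
    have q54 : f5 4 = f2 1 * f3 2 := by
      have t := congrFun h5 4; rw [mulT609_4, q31] at t; simpa using t
    -- f6 coordinates
    have A0 : (α+1) * f6 0 = 0 := by simpa using congrFun h6a 0
    have B0 : α * f6 0 = 0 := by simpa using congrFun h6b 0
    have s0 : f6 0 = 0 := by linear_combination A0 - B0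
    have A1 : (α+1) * f6 1 = 0 := by simpa using congrFun h6a 1
    have B1 : α * f6 1 = 0 := by simpa using congrFun h6b 1
    have s1 : f6 1 = 0 := by linear_combination A1 - B1
    have A2 : (α+1) * f6 2 = 0 := by
      have t := congrFun h6a 2
      simp only [Pi.smul_apply, smul_eq_mul, mulT609_2] at t
      rw [q50, q51] at t; simpa using t
    have B2 : α * f6 2 = 0 := by
      have t := congrFun h6b 2
      simp only [Pi.smul_apply, smul_eq_mul, mulT609_2] at t
      rw [q40, q41] at t; simpa using t
    have s2 : f6 2 = 0 := by linear_combination A2 - B2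
    have A3 : (α+1) * f6 3 = 0 := by
      have t := congrFun h6a 3
      simp only [Pi.smul_apply, smul_eq_mul, mulT609_3] at t
      rw [q50, q52] at t; simpa using t
    have B3 : α * f6 3 = 0 := by
      have t := congrFun h6b 3
      simp only [Pi.smul_apply, smul_eq_mul, mulT609_3] at t
      rw [q40, q42] at t; simpa using t
    have s3 : f6 3 = 0 := by linear_combination A3 - B3
    have A4 : (α+1) * f6 4 = 0 := by
      have t := congrFun h6a 4
      simp only [Pi.smul_apply, smul_eq_mul, mulT609_4] at t
      rw [q51, q52] at t; simpa using t
    have B4 : α * f6 4 = 0 := by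
      have t := congrFun h6b 4
      simp only [Pi.smul_apply, smul_eq_mul, mulT609_4] at t
      rw [q41, q42] at t; simpa using t
    have s4 : f6 4 = 0 := by linear_combination A4 - B4
    have A5 : (α+1) * f6 5
        = (β+1) * (f1 0 * (f2 1 * f3 2) - f1 4 * 0)
          + β * (f1 1 * (f2 0 * f3 2) - f1 3 * 0) := by
      have t := congrFun h6a 5
      simp only [Pi.smul_apply, smul_eq_mul, mulT609_5] at t
      rw [q50, q51, q53, q54] at t; exact t
    have B5 : α * f6 5
        = (β+1) * (f2 0 * (f1 1 * f3 2) - f2 4 * 0)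
          + β * (f2 1 * (f1 0 * f3 2) - f2 3 * 0) := by
      have t := congrFun h6b 5
      simp only [Pi.smul_apply, smul_eq_mul, mulT609_5] at t
      rw [q40, q41, q43, q44] at t; exact t
    have s5 : f6 5 = f3 2 * f3 2 := by
      have t : f6 5 = (f1 0 * f2 1 - f1 1 * f2 0) * f3 2 := by
        linear_combination A5 - B5
      rw [t, q32]
    -- D ≠ 0
    have h6ne : f6 ≠ 0 := by
      rw [hf6]
      intro hh
      have h0 : T609e6 = 0 := by
        have := e.injective (a₁ := T609e6) (a₂ := 0) (by rw [map_zero]; exact hh)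
        exact this
      have : (1:ℂ) = 0 := by simpa using congrFun h0 5
      exact one_ne_zero this
    have hD : f3 2 ≠ 0 := by
      intro hD0
      apply h6ne
      funext i
      fin_cases i
      · exact s0
      · exact s1
      · exact s2
      · exact s3
      · exact s4
      · show f6 5 = 0
        rw [s5, hD0, mul_zero]
    -- zero products
    have Z1 : (f1 0 * f1 1) * (f3 2 * (2*β+1)) = 0 := by
      have t := congrFun hz1 5
      simp only [mulT609_5, Pi.zero_apply] at t
      rw [q40, q41, q43, q44] at t
      linear_combination t
    have Z2 : (f2 0 * f2 1) * (f3 2 * (2*β+1)) = 0 := by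
      have t := congrFun hz2 5
      simp only [mulT609_5, Pi.zero_apply] at t
      rw [q50, q51, q53, q54] at t
      linear_combination t
    -- apply the algebraic lemma
    have hDexp : f1 0 * f2 1 - f1 1 * f2 0 ≠ 0 := by rw [← q32]; exact hD
    refine T609_alg α β (f1 0) (f1 1) (f2 0) (f2 1) hDexp ?_ ?_ ?_ ?_
    · have t := A5; rw [s5, q32] at t; linear_combination t
    · have t := B5; rw [s5, q32] at t; linear_combination t
    · have t := Z1; rw [q32] at t; linear_combination t
    · have t := Z2; rw [q32] at t; linear_combination t
  · rintro (rfl | rfl)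
    · exact ⟨LinearEquiv.refl ℂ _, fun u v => rfl⟩
    · exact ⟨T609sig, fun u v => T609sig_mul α u v⟩
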